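/- Let n ≥ 1 and let H = {w_1, …, w_T} be a set of T distinct vectors spanning ℝ^{n+1}. Let W = (w_{i_1}, …, w_{i_n}) be an ordered n-tuple of distinct, linearly independent vectors from H, and for l = 1, …, n set L_l(W) = span(w_{i_{n-l+1}}, …, w_{i_n}) and q_l^W = |L_l(W) ∩ H|. Fix an index i ∈ {1, …, T} with w_i ∉ L_n(W) = span(w_{i_1}, …, w_{i_n}). Then the number of permutations γ of {1, …, T} satisfying γ(1) = i, γ^{-1}(i_1) < γ^{-1}(i_2) < ⋯ < γ^{-1}(i_n), and for every l = 1, …, n, min{ γ^{-1}(j) : w_j ∈ L_l(W) ∩ H } = γ^{-1}(i_{n-l+1}), is exactly (T−1)! / (q_n^W · q_{n-1}^W ⋯ q_1^W). -/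
import Mathlib


def flagSpan {n T : ℕ} (w : Fin T → (Fin (n + 1) → ℝ)) (i : Fin n → Fin T)
    (l : Fin n) : Submodule ℝ (Fin (n + 1) → ℝ) :=
  Submodule.span ℝ {x | ∃ k : Fin n, l ≤ k ∧ x = w (i k)}

noncomputable def flagQ {n T : ℕ} (w : Fin T → (Fin (n + 1) → ℝ)) (i : Fin n → Fin T)
    (l : Fin n) : ℕ :=
  Set.ncard {j : Fin T | w j ∈ flagSpan w i l}


open Equiv in
private lemma perm_fix_card {α : Type*} [Fintype α] [DecidableEq α] (x0 y0 : α) :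
    Nat.card {γ : Equiv.Perm α // γ x0 = y0} = (Fintype.card α - 1).factorial := by
  have e1 : {γ : Equiv.Perm α // γ x0 = y0} ≃ {γ : Equiv.Perm α // γ x0 = x0} :=
  { toFun := fun γ => ⟨γ.1.trans (swap y0 x0), by simp [γ.2]⟩
    invFun := fun δ => ⟨δ.1.trans (swap y0 x0), by simp [δ.2]⟩
    left_inv := fun γ => Subtype.ext (Equiv.ext fun x => by simp [swap_apply_self])
    right_inv := fun δ => Subtype.ext (Equiv.ext fun x => by simp [swap_apply_self]) }
  have e2 : {γ : Equiv.Perm α // γ x0 = x0} ≃ Equiv.Perm {z : α // z ≠ x0} := by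
    refine (Equiv.subtypeEquivRight ?_).trans
      (Equiv.Perm.subtypeEquivSubtypePerm (fun z => z ≠ x0)).symm
    intro γ
    constructor
    · intro h a ha
      rwa [not_not.1 ha]
    · intro h
      exact h x0 (not_not.2 rfl)
  rw [Nat.card_congr (e1.trans e2), Nat.card_eq_fintype_card, Fintype.card_perm]
  congr 1
  rw [Fintype.card_subtype_compl, Fintype.card_subtype_eq]

private lemma chain_count {α : Type*} [Fintype α] [LinearOrder α]
    {n : ℕ} (S : Fin n → Set α) (a : Fin n → α) (x0 y0 : α)
    (hS : ∀ k l : Fin n, k ≤ l → S l ⊆ S k)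
    (haS : ∀ l, a l ∈ S l)
    (hanot : ∀ k l : Fin n, k < l → a k ∉ S l)
    (hy0 : ∀ l, y0 ∉ S l)
    (hfix : Nat.card {γ : Equiv.Perm α // γ x0 = y0} = (Fintype.card α - 1).factorial) :
    Nat.card {γ : Equiv.Perm α // γ x0 = y0 ∧
        ∀ l : Fin n, ∀ j : α, j ∈ S l → γ.symm (a l) ≤ γ.symm j}
      * ∏ l : Fin n, Nat.card (S l) = (Fintype.card α - 1).factorial := by
  classical
  set P : ℕ → Equiv.Perm α → Prop := fun m γ =>
    γ x0 = y0 ∧ ∀ l : Fin n, (l : ℕ) < m → ∀ j : α, j ∈ S l → γ.symm (a l) ≤ γ.symm j with hP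
  -- swap preservation
  have pres : ∀ (m : ℕ) (hm : m < n) (γ : Equiv.Perm α) (j' : α), j' ∈ S ⟨m, hm⟩ →
      P m γ → P m (γ.trans (Equiv.swap (a ⟨m, hm⟩) j')) := by
    intro m hm γ j' hj' hγ
    obtain ⟨hx, hcond⟩ := hγ
    set l : Fin n := ⟨m, hm⟩ with hldef
    have hal : a l ∈ S l := haS l
    have hy0l := hy0 l
    constructor
    · show Equiv.swap (a l) j' (γ x0) = y0
      rw [hx, Equiv.swap_apply_of_ne_of_ne (fun h => hy0l (by rw [h]; exact hal))
        (fun h => hy0l (by rw [h]; exact hj'))]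
    · intro l' hl' j hj
      have hl'l : l' < l := hl'
      have hsub : S l ⊆ S l' := hS l' l (le_of_lt hl'l)
      have hal' : a l' ∉ S l := hanot l' l hl'l
      have hsymm : ∀ z : α, (γ.trans (Equiv.swap (a l) j')).symm z
          = γ.symm (Equiv.swap (a l) j' z) := by
        intro z; simp [Equiv.symm_trans_apply]
      rw [hsymm, hsymm,
        Equiv.swap_apply_of_ne_of_ne (fun h => hal' (by rw [h]; exact hal))
          (fun h => hal' (by rw [h]; exact hj'))]
      have hmem : Equiv.swap (a l) j' j ∈ S l' := by
        rcases eq_or_ne j (a l) with rfl | h1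
        · rw [Equiv.swap_apply_left]; exact hsub hj'
        rcases eq_or_ne j j' with rfl | h2
        · rw [Equiv.swap_apply_right]; exact hsub hal
        · rw [Equiv.swap_apply_of_ne_of_ne h1 h2]; exact hj
      exact hcond l' hl' _ hmem
  have htrans_symm : ∀ (γ : Equiv.Perm α) (u v z : α),
      (γ.trans (Equiv.swap u v)).symm z = γ.symm (Equiv.swap u v z) := by
    intro γ u v z; simp [Equiv.symm_trans_apply]
  have hdouble : ∀ (γ : Equiv.Perm α) (u v : α),
      (γ.trans (Equiv.swap u v)).trans (Equiv.swap u v) = γ := by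
    intro γ u v; ext x; simp [Equiv.swap_apply_self]
  -- the inductive step
  have step : ∀ (m : ℕ) (hm : m < n),
      Nat.card {γ : Equiv.Perm α // P m γ}
        = Nat.card {γ : Equiv.Perm α // P (m + 1) γ} * Nat.card (S ⟨m, hm⟩) := by
    intro m hm
    set l : Fin n := ⟨m, hm⟩ with hldef
    have exmin : ∀ γ : Equiv.Perm α, ∃ j, j ∈ S l ∧ ∀ j'' ∈ S l, γ.symm j ≤ γ.symm j'' := by
      intro γ
      obtain ⟨j, hj, hmin⟩ := Finset.exists_min_image
        (Finset.univ.filter (fun j => j ∈ S l)) γ.symm ⟨a l, by simp [haS l]⟩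
      exact ⟨j, by simpa using hj, fun j'' hj'' => hmin j'' (by simp [hj''])⟩
    choose j₀ hj₀S hj₀min using exmin
    have huniq : ∀ (γ : Equiv.Perm α) (j : α), j ∈ S l →
        (∀ j'' ∈ S l, γ.symm j ≤ γ.symm j'') → j = j₀ γ := by
      intro γ j hj hmin
      have h1 : γ.symm j = γ.symm (j₀ γ) :=
        le_antisymm (hmin _ (hj₀S γ)) (hj₀min γ _ hj)
      exact γ.symm.injective h1
    -- membership in S l of swapped elements
    have hswapmem : ∀ (j j'' : α), j ∈ S l → j'' ∈ S l → Equiv.swap (a l) j j'' ∈ S l := by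
      intro j j'' hj hj''
      rcases eq_or_ne j'' (a l) with rfl | h1
      · rw [Equiv.swap_apply_left]; exact hj
      rcases eq_or_ne j'' j with rfl | h2
      · rw [Equiv.swap_apply_right]; exact haS l
      · rw [Equiv.swap_apply_of_ne_of_ne h1 h2]; exact hj''
    have e : {γ : Equiv.Perm α // P m γ} ≃ {γ : Equiv.Perm α // P (m + 1) γ} × (S l) := by
      refine
      { toFun := fun γp => (⟨γp.1.trans (Equiv.swap (a l) (j₀ γp.1)), ?_⟩,
          ⟨j₀ γp.1, hj₀S γp.1⟩)
        invFun := fun q => ⟨q.1.1.trans (Equiv.swap (a l) q.2.1), ?_⟩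
        left_inv := ?_
        right_inv := ?_ }
      · -- toFun well-defined
        obtain ⟨γ, hγ⟩ := γp
        have hbase : P m (γ.trans (Equiv.swap (a l) (j₀ γ))) := pres m hm γ _ (hj₀S γ) hγ
        refine ⟨hbase.1, fun l' hl' j hj => ?_⟩
        rcases Nat.lt_succ_iff_lt_or_eq.1 hl' with h | h
        · exact hbase.2 l' h j hj
        · have : l' = l := Fin.ext h
          subst this
          rw [htrans_symm, htrans_symm, Equiv.swap_apply_left]
          exact hj₀min γ _ (hswapmem _ _ (hj₀S γ) hj)
      · -- invFun well-defined
        obtain ⟨⟨γ', hγ'⟩, ⟨j, hj⟩⟩ := q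
        exact pres m hm γ' j hj ⟨hγ'.1, fun l' hl' j'' hj'' => hγ'.2 l' (hl'.trans (Nat.lt_succ_self m)) j'' hj''⟩
      · -- left_inv
        rintro ⟨γ, hγ⟩
        exact Subtype.ext (hdouble γ _ _)
      · -- right_inv
        rintro ⟨⟨γ', hγ'⟩, ⟨j, hj⟩⟩
        have hj0 : j = j₀ (γ'.trans (Equiv.swap (a l) j)) := by
          apply huniq _ _ hj
          intro j'' hj''
          rw [htrans_symm, htrans_symm, Equiv.swap_apply_right]
          exact hγ'.2 l (Nat.lt_succ_self m) _ (hswapmem _ _ hj hj'')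
        have hswap_eq : Equiv.swap (a l) (j₀ (γ'.trans (Equiv.swap (a l) j))) = Equiv.swap (a l) j := by
          rw [← hj0]
        ext
        · show ((γ'.trans (Equiv.swap (a l) j)).trans
            (Equiv.swap (a l) (j₀ (γ'.trans (Equiv.swap (a l) j))))) _ = γ' _
          rw [hswap_eq, hdouble]
        · show (j₀ (γ'.trans (Equiv.swap (a l) j)) : α) = j
          exact hj0.symm
    rw [Nat.card_congr e, Nat.card_prod]
  -- downward induction
  have main : ∀ m : ℕ, m ≤ n →
      Nat.card {γ : Equiv.Perm α // P m γ}
        * ∏ l ∈ Finset.univ.filter (fun l : Fin n => (l : ℕ) < m), Nat.card (S l)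
        = (Fintype.card α - 1).factorial := by
    intro m
    induction m with
    | zero =>
      intro _
      have hfilter : Finset.univ.filter (fun l : Fin n => (l : ℕ) < 0) = ∅ := by
        ext l; simp
      rw [hfilter, Finset.prod_empty, mul_one]
      rw [show {γ : Equiv.Perm α // P 0 γ} = {γ : Equiv.Perm α // γ x0 = y0 ∧
          ∀ l : Fin n, (l : ℕ) < 0 → ∀ j : α, j ∈ S l → γ.symm (a l) ≤ γ.symm j} from rfl]
      rw [Nat.card_congr (Equiv.subtypeEquivRight (fun γ =>
        ⟨fun h => h.1, fun h => ⟨h, fun l hl => absurd hl (Nat.not_lt_zero _)⟩⟩))]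
      exact hfix
    | succ m ih =>
      intro hm1
      have hm : m < n := hm1
      have hfilter : Finset.univ.filter (fun l : Fin n => (l : ℕ) < m + 1)
          = insert ⟨m, hm⟩ (Finset.univ.filter (fun l : Fin n => (l : ℕ) < m)) := by
        ext l
        simp only [Finset.mem_filter, Finset.mem_univ, true_and, Finset.mem_insert]
        constructor
        · intro h
          rcases Nat.lt_succ_iff_lt_or_eq.1 h with h | h
          · exact Or.inr h
          · exact Or.inl (Fin.ext h)
        · rintro (rfl | h)
          · exact Nat.lt_succ_self m
          · exact h.trans (Nat.lt_succ_self m)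
      have hnotmem : (⟨m, hm⟩ : Fin n) ∉ Finset.univ.filter (fun l : Fin n => (l : ℕ) < m) := by
        simp
      have ih' := ih (le_of_lt hm)
      rw [step m hm] at ih'
      rw [hfilter, Finset.prod_insert hnotmem, ← ih']
      ring
  have hfin : Finset.univ.filter (fun l : Fin n => (l : ℕ) < n) = Finset.univ := by
    ext l; simp [l.isLt]
  have := main n le_rfl
  rw [hfin] at this
  rw [← this]
  congr 1
  apply Nat.card_congr (Equiv.subtypeEquivRight _)
  intro γ
  exact ⟨fun h => ⟨h.1, fun l _ => h.2 l⟩, fun h => ⟨h.1, fun l => h.2 l l.isLt⟩⟩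

theorem permutation_count (n T : ℕ) (hn : 1 ≤ n) (hT : 0 < T)
    (w : Fin T → (Fin (n + 1) → ℝ)) (hw : Function.Injective w)
    (hspan : Submodule.span ℝ (Set.range w) = ⊤)
    (i : Fin n → Fin T) (hli : LinearIndependent ℝ (w ∘ i))
    (i₀ : Fin T) (hi₀ : w i₀ ∉ Submodule.span ℝ (Set.range (w ∘ i))) :
    (Nat.card {γ : Equiv.Perm (Fin T) //
        γ ⟨0, hT⟩ = i₀ ∧
        (∀ a b : Fin n, a < b → γ.symm (i a) < γ.symm (i b)) ∧
        (∀ l : Fin n, ∀ j : Fin T, w j ∈ flagSpan w i l → γ.symm (i l) ≤ γ.symm j)} : ℚ) =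
      ((T - 1).factorial : ℚ) / ∏ l : Fin n, (flagQ w i l : ℚ) := by
  classical
  set S : Fin n → Set (Fin T) := fun l => {j | w j ∈ flagSpan w i l} with hSdef
  have hmemS : ∀ (l : Fin n) (j : Fin T), j ∈ S l ↔ w j ∈ flagSpan w i l := by
    intro l j; rfl
  have hS : ∀ k l : Fin n, k ≤ l → S l ⊆ S k := by
    intro k l hkl j hj
    exact Submodule.span_mono (fun x hx => by
      obtain ⟨k', hk', hx⟩ := hx; exact ⟨k', hkl.trans hk', hx⟩) hj
  have haS : ∀ l : Fin n, i l ∈ S l := by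
    intro l
    exact Submodule.subset_span ⟨l, le_refl l, rfl⟩
  have himage : ∀ l : Fin n,
      flagSpan w i l = Submodule.span ℝ ((w ∘ i) '' {k | l ≤ k}) := by
    intro l
    unfold flagSpan
    congr 1
    ext x
    constructor
    · rintro ⟨k, hk, rfl⟩; exact ⟨k, hk, rfl⟩
    · rintro ⟨k, hk, rfl⟩; exact ⟨k, hk, rfl⟩
  have hanot : ∀ k l : Fin n, k < l → i k ∉ S l := by
    intro k l hkl hmem
    rw [hmemS, himage l] at hmem
    exact hli.notMem_span_image (s := {k' : Fin n | l ≤ k'}) (x := k)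
      (by simp only [Set.mem_setOf_eq]; exact not_le.2 hkl) hmem
  have hy0 : ∀ l : Fin n, i₀ ∉ S l := by
    intro l hmem
    rw [hmemS] at hmem
    apply hi₀
    refine Submodule.span_mono ?_ hmem
    rintro x ⟨k, _, rfl⟩
    exact ⟨k, rfl⟩
  have key := chain_count S i ⟨0, hT⟩ i₀ hS haS hanot hy0 (perm_fix_card _ _)
  rw [Fintype.card_fin] at key
  -- identify the two subtype cards
  have hiinj : ∀ a b : Fin n, a ≠ b → i a ≠ i b := by
    intro a b hab h
    exact hab (hli.injective (show (w ∘ i) a = (w ∘ i) b by simp [Function.comp, h]))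
  have hcards : Nat.card {γ : Equiv.Perm (Fin T) //
        γ ⟨0, hT⟩ = i₀ ∧
        (∀ a b : Fin n, a < b → γ.symm (i a) < γ.symm (i b)) ∧
        (∀ l : Fin n, ∀ j : Fin T, w j ∈ flagSpan w i l → γ.symm (i l) ≤ γ.symm j)}
      = Nat.card {γ : Equiv.Perm (Fin T) // γ ⟨0, hT⟩ = i₀ ∧
        ∀ l : Fin n, ∀ j : Fin T, j ∈ S l → γ.symm (i l) ≤ γ.symm j} := by
    apply Nat.card_congr
    apply Equiv.subtypeEquivRight
    intro γ
    constructor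
    · rintro ⟨h1, _, h3⟩
      exact ⟨h1, fun l j hj => h3 l j ((hmemS l j).1 hj)⟩
    · rintro ⟨h1, h3⟩
      refine ⟨h1, fun a b hab => ?_, fun l j hj => h3 l j ((hmemS l j).2 hj)⟩
      have hle : γ.symm (i a) ≤ γ.symm (i b) :=
        h3 a (i b) ((hmemS a (i b)).2 (Submodule.subset_span ⟨b, le_of_lt hab, rfl⟩))
      have hne : γ.symm (i a) ≠ γ.symm (i b) :=
        fun h => hiinj a b (ne_of_lt hab) (γ.symm.injective h)
      exact lt_of_le_of_ne hle hne
  have hq : ∀ l : Fin n, flagQ w i l = Nat.card (S l) := by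
    intro l
    rw [flagQ, ← Nat.card_coe_set_eq]
  have hqpos : ∀ l : Fin n, 0 < flagQ w i l := by
    intro l
    rw [hq l]
    have : Nonempty (S l) := ⟨⟨i l, haS l⟩⟩
    exact Nat.card_pos
  have hprodne : (∏ l : Fin n, (flagQ w i l : ℚ)) ≠ 0 := by
    apply Finset.prod_ne_zero_iff.2
    intro l _
    exact_mod_cast (hqpos l).ne'
  rw [hcards, eq_div_iff hprodne]
  have : (∏ l : Fin n, (flagQ w i l : ℚ)) = ((∏ l : Fin n, Nat.card (S l) : ℕ) : ℚ) := by
    push_cast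
    exact Finset.prod_congr rfl (fun l _ => by rw [hq l])
  rw [this]
  exact_mod_cast key
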